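/- arXiv:2401.14340 — 2 statements merged into one kernel-verified Lean document; each statement's English description precedes it below -/
import Mathlib

section
/- For every positive definite real symmetric n×n matrix V, there exists a unique positive definite matrix Θ* ∈ C that maximizes f(Θ; V) = log det Θ − tr(V Θ) over all positive definite real symmetric n×n matrices Θ belonging to C. -/
open Matrix

section Helpers

variable {n : ℕ}

open scoped MatrixOrder in
noncomputable def Matrix.PosSemidef.sqrt {A : Matrix (Fin n) (Fin n) ℝ} (_hA : A.PosSemidef) :
    Matrix (Fin n) (Fin n) ℝ := CFC.sqrt A

open scoped MatrixOrder in
lemma Matrix.PosSemidef.posSemidef_sqrt {A : Matrix (Fin n) (Fin n) ℝ} (hA : A.PosSemidef) :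
    hA.sqrt.PosSemidef := Matrix.nonneg_iff_posSemidef.mp (CFC.sqrt_nonneg A)

open scoped MatrixOrder in
lemma Matrix.PosSemidef.sqrt_mul_self {A : Matrix (Fin n) (Fin n) ℝ} (hA : A.PosSemidef) :
    hA.sqrt * hA.sqrt = A := CFC.sqrt_mul_sqrt_self A (Matrix.nonneg_iff_posSemidef.mpr hA)

lemma myPosDef.smul {A : Matrix (Fin n) (Fin n) ℝ} (hA : A.PosDef) {c : ℝ} (hc : 0 < c) :
    (c • A).PosDef := by
  refine posDef_iff_dotProduct_mulVec.mpr ⟨?_, fun x hx => ?_⟩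
  · unfold Matrix.IsHermitian
    rw [conjTranspose_smul, hA.1]
    simp [star]
  · rw [smul_mulVec, dotProduct_smul, smul_eq_mul]
    exact mul_pos hc (hA.dotProduct_mulVec_pos hx)

lemma psd_diag_nonneg {A : Matrix (Fin n) (Fin n) ℝ} (hA : A.PosSemidef) (i : Fin n) :
    0 ≤ A i i := by
  simpa using hA.dotProduct_mulVec_nonneg (Pi.single i 1)

lemma psd_trace_nonneg {A : Matrix (Fin n) (Fin n) ℝ} (hA : A.PosSemidef) : 0 ≤ A.trace :=
  Finset.sum_nonneg fun i _ => psd_diag_nonneg hA i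

lemma trace_mul_psd_nonneg {A B : Matrix (Fin n) (Fin n) ℝ}
    (hA : A.PosSemidef) (hB : B.PosSemidef) : 0 ≤ (A * B).trace := by
  have h3 : (hB.sqrt * A * hB.sqrtᴴ).PosSemidef := hA.mul_mul_conjTranspose_same _
  rw [hB.posSemidef_sqrt.isHermitian] at h3
  have h1 : A * B = A * (hB.sqrt * hB.sqrt) := by rw [hB.sqrt_mul_self]
  have h2 : (A * (hB.sqrt * hB.sqrt)).trace = (hB.sqrt * A * hB.sqrt).trace := by
    rw [← Matrix.mul_assoc, Matrix.trace_mul_cycle]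
  rw [h1, h2]
  exact psd_trace_nonneg h3

lemma my_spectral {A : Matrix (Fin n) (Fin n) ℝ} (hA : A.IsHermitian) :
    A = (hA.eigenvectorUnitary : Matrix (Fin n) (Fin n) ℝ) * diagonal hA.eigenvalues
      * star (hA.eigenvectorUnitary : Matrix (Fin n) (Fin n) ℝ) := by
  have := hA.spectral_theorem
  rwa [RCLike.ofReal_real_eq_id, Function.id_comp] at this

lemma my_trace_eq_sum {A : Matrix (Fin n) (Fin n) ℝ} (hA : A.IsHermitian) :
    A.trace = ∑ i, hA.eigenvalues i := by
  conv_lhs => rw [my_spectral hA]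
  rw [Matrix.trace_mul_cycle]
  rw [(Matrix.mem_unitaryGroup_iff').mp hA.eigenvectorUnitary.2, Matrix.one_mul,
    Matrix.trace_diagonal]

lemma conj_unitary_psd {A : Matrix (Fin n) (Fin n) ℝ} (hA : A.IsHermitian)
    (f : Fin n → ℝ) (hf : ∀ i, 0 ≤ f i) :
    ((hA.eigenvectorUnitary : Matrix (Fin n) (Fin n) ℝ) * diagonal f
      * star (hA.eigenvectorUnitary : Matrix (Fin n) (Fin n) ℝ)).PosSemidef := by
  have := (Matrix.PosSemidef.diagonal (R := ℝ) (n := Fin n) (d := f) hf).mul_mul_conjTranspose_same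
    (hA.eigenvectorUnitary : Matrix (Fin n) (Fin n) ℝ)
  simpa [Matrix.star_eq_conjTranspose] using this

lemma shift_lower_psd {A : Matrix (Fin n) (Fin n) ℝ} (hA : A.IsHermitian) {δ : ℝ}
    (h : ∀ i, δ ≤ hA.eigenvalues i) : (A - δ • 1).PosSemidef := by
  have key : A - δ • (1 : Matrix (Fin n) (Fin n) ℝ)
      = (hA.eigenvectorUnitary : Matrix (Fin n) (Fin n) ℝ)
        * diagonal (fun i => hA.eigenvalues i - δ)
        * star (hA.eigenvectorUnitary : Matrix (Fin n) (Fin n) ℝ) := by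
    have hd : diagonal (fun i => hA.eigenvalues i - δ)
        = diagonal hA.eigenvalues - δ • (1 : Matrix (Fin n) (Fin n) ℝ) := by
      rw [Matrix.smul_one_eq_diagonal, ← Matrix.diagonal_sub]
    rw [hd, Matrix.mul_sub, Matrix.sub_mul]
    congr 1
    · exact my_spectral hA
    · rw [mul_smul_comm, smul_mul_assoc, Matrix.mul_one,
        (Matrix.mem_unitaryGroup_iff).mp hA.eigenvectorUnitary.2]
  rw [key]
  exact conj_unitary_psd hA _ fun i => by linarith [h i]

lemma shift_upper_psd {A : Matrix (Fin n) (Fin n) ℝ} (hA : A.IsHermitian) {M : ℝ}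
    (h : ∀ i, hA.eigenvalues i ≤ M) : (M • 1 - A).PosSemidef := by
  have key : M • (1 : Matrix (Fin n) (Fin n) ℝ) - A
      = (hA.eigenvectorUnitary : Matrix (Fin n) (Fin n) ℝ)
        * diagonal (fun i => M - hA.eigenvalues i)
        * star (hA.eigenvectorUnitary : Matrix (Fin n) (Fin n) ℝ) := by
    have hd : diagonal (fun i => M - hA.eigenvalues i)
        = M • (1 : Matrix (Fin n) (Fin n) ℝ) - diagonal hA.eigenvalues := by
      rw [Matrix.smul_one_eq_diagonal, ← Matrix.diagonal_sub]
    rw [hd, Matrix.mul_sub, Matrix.sub_mul]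
    congr 1
    · rw [mul_smul_comm, smul_mul_assoc, Matrix.mul_one,
        (Matrix.mem_unitaryGroup_iff).mp hA.eigenvectorUnitary.2]
    · exact my_spectral hA
  rw [key]
  exact conj_unitary_psd hA _ fun i => by linarith [h i]

lemma term_ub {ε t : ℝ} (hε : 0 < ε) (ht : 0 < t) :
    Real.log t - ε * t ≤ -Real.log ε - 1 := by
  have h := Real.log_le_sub_one_of_pos (mul_pos hε ht)
  rw [Real.log_mul hε.ne' ht.ne'] at h
  linarith

lemma scalar_bound {ε c' t : ℝ} (hε : 0 < ε) (ht : 0 < t)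
    (h : c' ≤ Real.log t - ε * t) :
    Real.exp c' ≤ t ∧ t ≤ (max (4 / ε) (|c'| / 2)) ^ 2 := by
  constructor
  · have h1 : c' ≤ Real.log t := by nlinarith
    calc Real.exp c' ≤ Real.exp (Real.log t) := Real.exp_le_exp.2 h1
      _ = t := Real.exp_log ht
  · set s := Real.sqrt t with hs
    have hs0 : 0 < s := Real.sqrt_pos.2 ht
    have hts : t = s ^ 2 := (Real.sq_sqrt ht.le).symm
    have hlog : Real.log t ≤ 2 * s := by
      have : Real.log s ≤ s - 1 := Real.log_le_sub_one_of_pos hs0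
      have h2 : Real.log t = 2 * Real.log s := by
        rw [hts, Real.log_pow]; push_cast; ring
      nlinarith
    have hkey : c' ≤ 2 * s - ε * s ^ 2 := by nlinarith
    rcases le_or_gt s (4 / ε) with hc | hc
    · rw [hts]
      have : s ≤ max (4 / ε) (|c'| / 2) := le_trans hc (le_max_left _ _)
      nlinarith [le_max_left (4/ε) (|c'|/2), abs_nonneg c']
    · have h4 : 4 * s < ε * s ^ 2 := by
        have h5 : 4 < ε * s := by
          rw [div_lt_iff₀ hε] at hc; nlinarith
        nlinarith
      have hneg : c' ≤ -2 * s := by nlinarith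
      have : s ≤ |c'| / 2 := by
        have h6 : 2 * s ≤ -c' := by linarith
        have := neg_le_abs c'
        linarith
      rw [hts]
      have hm : s ≤ max (4 / ε) (|c'| / 2) := le_trans this (le_max_right _ _)
      nlinarith [le_max_left (4/ε) (|c'|/2), abs_nonneg c']

lemma scalar_concave {μ : ℝ} (hμ : 0 < μ) :
    Real.log μ / 2 ≤ Real.log ((1 + μ) / 2) ∧
      (μ ≠ 1 → Real.log μ / 2 < Real.log ((1 + μ) / 2)) := by
  have hs0 : 0 < Real.sqrt μ := Real.sqrt_pos.2 hμ
  have hsq : Real.sqrt μ ^ 2 = μ := Real.sq_sqrt hμ.le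
  have hle : Real.sqrt μ ≤ (1 + μ) / 2 := by nlinarith [sq_nonneg (Real.sqrt μ - 1)]
  have hlogs : Real.log (Real.sqrt μ) = Real.log μ / 2 := Real.log_sqrt hμ.le
  refine ⟨by rw [← hlogs]; exact Real.log_le_log hs0 hle, fun hne => ?_⟩
  have hne' : Real.sqrt μ ≠ 1 := by
    intro h; apply hne; rw [← hsq, h]; norm_num
  have hlt : Real.sqrt μ < (1 + μ) / 2 := by
    rcases lt_or_gt_of_ne hne' with h | h <;> nlinarith [sq_nonneg (Real.sqrt μ - 1)]
  rw [← hlogs]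
  exact Real.log_lt_log hs0 hlt

lemma quad_pair {A : Matrix (Fin n) (Fin n) ℝ} (hA : A.PosSemidef) (i j : Fin n) (c : ℝ) :
    0 ≤ A i i + c * A i j + c * A j i + c * c * A j j := by
  have := hA.dotProduct_mulVec_nonneg (Pi.single i 1 + Pi.single j c)
  simp only [star_trivial, add_dotProduct, dotProduct_add, mulVec_add,
    Matrix.mulVec_single, single_dotProduct, Pi.smul_apply, op_smul_eq_mul,
    Matrix.col_apply] at this
  nlinarith [this]

lemma psd_entry_bound {A : Matrix (Fin n) (Fin n) ℝ} (hA : A.PosSemidef) {M : ℝ}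
    (hM : (M • 1 - A).PosSemidef) (i j : Fin n) : |A i j| ≤ M := by
  have hdiag : ∀ k, A k k ≤ M := fun k => by
    have h := psd_diag_nonneg hM k
    simp only [Matrix.sub_apply, Matrix.smul_apply, Matrix.one_apply_eq, smul_eq_mul,
      mul_one] at h
    linarith
  rcases eq_or_ne i j with rfl | hij
  · rw [abs_le]; exact ⟨by linarith [psd_diag_nonneg hA i, hdiag i], hdiag i⟩
  · have hsym : A j i = A i j := by
      have h := hA.1
      calc A j i = Aᴴ i j := by simp [Matrix.conjTranspose_apply]
        _ = A i j := by rw [h]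
    have h1 := quad_pair hA i j 1
    have h2 := quad_pair hA i j (-1)
    rw [abs_le]
    constructor
    · nlinarith [psd_diag_nonneg hA i, psd_diag_nonneg hA j, hdiag i, hdiag j]
    · nlinarith [psd_diag_nonneg hA i, psd_diag_nonneg hA j, hdiag i, hdiag j]

lemma continuous_quad (x : Fin n → ℝ) :
    Continuous fun A : Matrix (Fin n) (Fin n) ℝ => x ⬝ᵥ A *ᵥ x := by
  simp only [dotProduct, mulVec]
  exact continuous_finset_sum _ fun i _ => continuous_const.mul
    (continuous_finset_sum _ fun j _ =>
      by fun_prop)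

lemma isClosed_posSemidef : IsClosed {A : Matrix (Fin n) (Fin n) ℝ | A.PosSemidef} := by
  have h : {A : Matrix (Fin n) (Fin n) ℝ | A.PosSemidef}
      = {A : Matrix (Fin n) (Fin n) ℝ | Aᴴ = A} ∩
        ⋂ x : Fin n → ℝ, {A | 0 ≤ x ⬝ᵥ A *ᵥ x} := by
    ext A
    simp only [Set.mem_setOf_eq, Set.mem_inter_iff, Set.mem_iInter]
    constructor
    · exact fun h => ⟨h.1, fun x => by simpa using h.dotProduct_mulVec_nonneg x⟩
    · exact fun h => posSemidef_iff_dotProduct_mulVec.mpr ⟨h.1, fun x => by simpa using h.2 x⟩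
  rw [h]
  refine IsClosed.inter (isClosed_eq ?_ continuous_id) (isClosed_iInter fun x =>
    isClosed_le continuous_const (continuous_quad x))
  exact continuous_matrix fun i j => (continuous_apply i).comp (continuous_apply j)

lemma box_compact (M : ℝ) :
    IsCompact {Θ : Matrix (Fin n) (Fin n) ℝ | ∀ i j, |Θ i j| ≤ M} := by
  have h : IsCompact ((Set.univ.pi fun _ : Fin n => Set.univ.pi fun _ : Fin n =>
      Set.Icc (-M) M) : Set (Matrix (Fin n) (Fin n) ℝ)) :=
    isCompact_univ_pi fun _ => isCompact_univ_pi fun _ => isCompact_Icc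
  have he : ((Set.univ.pi fun _ : Fin n => Set.univ.pi fun _ : Fin n =>
      Set.Icc (-M) M) : Set (Matrix (Fin n) (Fin n) ℝ))
      = {Θ : Matrix (Fin n) (Fin n) ℝ | ∀ i j, |Θ i j| ≤ M} := by
    ext Θ
    simp [Set.mem_pi, abs_le, Pi.le_def]
    exact ⟨fun h i j => ⟨h.1 i j, h.2 i j⟩, fun h => ⟨fun i j => (h i j).1, fun i j => (h i j).2⟩⟩
  rwa [he] at h

lemma continuous_obj (V : Matrix (Fin n) (Fin n) ℝ) :
    Continuous fun Θ : Matrix (Fin n) (Fin n) ℝ => (V * Θ).trace :=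
  (continuous_const.matrix_mul continuous_id).matrix_trace

lemma continuousAt_logdet {Θ₀ : Matrix (Fin n) (Fin n) ℝ} (h : Θ₀.det ≠ 0) :
    ContinuousAt (fun Θ : Matrix (Fin n) (Fin n) ℝ => Real.log Θ.det) Θ₀ :=
  (Real.continuousAt_log h).comp (Continuous.matrix_det continuous_id).continuousAt

lemma logdet_mid {A B : Matrix (Fin n) (Fin n) ℝ} (hA : A.PosDef) (hB : B.PosDef)
    (hne : A ≠ B) :
    (Real.log A.det + Real.log B.det) / 2 < Real.log ((2⁻¹ : ℝ) • (A + B)).det := by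
  classical
  set S := hA.posSemidef.sqrt with hSdef
  have hSh : S.IsHermitian := hA.posSemidef.posSemidef_sqrt.isHermitian
  have hSS : S * S = A := hA.posSemidef.sqrt_mul_self
  have hdetS : S.det * S.det = A.det := by rw [← det_mul, hSS]
  have hdetA : 0 < A.det := hA.det_pos
  have hdetB : 0 < B.det := hB.det_pos
  have hdS : IsUnit S.det := by
    refine isUnit_iff_ne_zero.2 fun h => ?_
    rw [h, mul_zero] at hdetS; linarith
  set T := S⁻¹ with hTdef
  have hST : S * T = 1 := mul_nonsing_inv S hdS
  have hTS : T * S = 1 := nonsing_inv_mul S hdS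
  have hTh : T.IsHermitian := by
    unfold Matrix.IsHermitian
    rw [hTdef, conjTranspose_nonsing_inv, hSh.eq]
  have hTt : Tᵀ = T := by
    ext i j
    rw [Matrix.transpose_apply]
    simpa using congrFun (congrFun hTh i) j
  set M := T * B * T with hMdef
  have hMH : M.IsHermitian := by
    unfold Matrix.IsHermitian
    rw [hMdef, conjTranspose_mul, conjTranspose_mul, hTh.eq, hB.isHermitian.eq,
      Matrix.mul_assoc]
  have hBM : S * M * S = B := by
    calc S * (T * B * T) * S = (S * T) * B * (T * S) := by
          simp only [Matrix.mul_assoc]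
      _ = B := by rw [hST, hTS, Matrix.one_mul, Matrix.mul_one]
  have hMpd : M.PosDef := by
    refine posDef_iff_dotProduct_mulVec.mpr ⟨hMH, fun x hx => ?_⟩
    have hy : T *ᵥ x ≠ 0 := by
      intro h
      apply hx
      have h2 : S *ᵥ (T *ᵥ x) = x := by rw [mulVec_mulVec, hST, one_mulVec]
      rw [h, mulVec_zero] at h2; exact h2.symm
    have h3 := hB.dotProduct_mulVec_pos hy
    simp only [star_trivial] at h3 ⊢
    calc (0:ℝ) < (T *ᵥ x) ⬝ᵥ B *ᵥ (T *ᵥ x) := h3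
      _ = x ⬝ᵥ M *ᵥ x := by
          rw [hMdef, ← mulVec_mulVec, ← mulVec_mulVec, dotProduct_mulVec x T,
            ← Matrix.mulVec_transpose, hTt]
  set μ := hMH.eigenvalues with hμdef
  have hμpos : ∀ i, 0 < μ i := fun i => hMpd.eigenvalues_pos i
  have hdetM : M.det = ∏ i, μ i := by
    have := hMH.det_eq_prod_eigenvalues
    simpa using this
  have hdetAM : A.det * M.det = B.det := by
    have h1 : B.det = S.det * M.det * S.det := by rw [← hBM, det_mul, det_mul]
    rw [h1, ← hdetS]; ring
  set U := (hMH.eigenvectorUnitary : Matrix (Fin n) (Fin n) ℝ) with hUdef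
  have hUU : U * star U = 1 := (Matrix.mem_unitaryGroup_iff).mp hMH.eigenvectorUnitary.2
  have h1M : (1 : Matrix (Fin n) (Fin n) ℝ) + M = U * diagonal (fun i => 1 + μ i) * star U := by
    have hd : diagonal (fun i => 1 + μ i)
        = 1 + diagonal μ := by rw [← diagonal_one, ← diagonal_add]
    rw [hd, Matrix.mul_add, Matrix.add_mul, Matrix.mul_one, hUU]
    congr 1
    rw [hμdef, hUdef]
    exact my_spectral hMH
  have hdet1M : (1 + M).det = ∏ i, (1 + μ i) := by
    rw [h1M, det_mul_right_comm, hUU, Matrix.one_mul, det_diagonal]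
  have hex : ∃ j, μ j ≠ 1 := by
    by_contra h
    push_neg at h
    have hM1 : M = 1 := by
      have hsp := my_spectral hMH
      rw [← hμdef, ← hUdef] at hsp
      have hd1 : diagonal μ = (1 : Matrix (Fin n) (Fin n) ℝ) := by
        have hfun : μ = fun _ => (1:ℝ) := funext h
        rw [hfun, Matrix.diagonal_one]
      rw [hd1, Matrix.mul_one, hUU] at hsp
      exact hsp
    apply hne
    rw [← hSS, ← hBM, hM1, Matrix.mul_one]
  have hsum_lt : ∑ i, Real.log (μ i) / 2 < ∑ i, Real.log ((1 + μ i) / 2) := by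
    obtain ⟨j, hj⟩ := hex
    refine Finset.sum_lt_sum (fun i _ => (scalar_concave (hμpos i)).1) ⟨j, Finset.mem_univ j, ?_⟩
    exact (scalar_concave (hμpos j)).2 hj
  have hlogM : Real.log M.det = ∑ i, Real.log (μ i) := by
    rw [hdetM, Real.log_prod fun i _ => (hμpos i).ne']
  have hlogMB : Real.log M.det = Real.log B.det - Real.log A.det := by
    have h1 := congrArg Real.log hdetAM
    rw [Real.log_mul hdetA.ne' hMpd.det_pos.ne'] at h1
    linarith
  have hABS : A + B = S * (1 + M) * S := by
    rw [Matrix.mul_add, Matrix.add_mul, Matrix.mul_one, hSS, hBM]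
  have hdetAB : (A + B).det = A.det * ∏ i, (1 + μ i) := by
    have h1 : (A+B).det = S.det * (1 + M).det * S.det := by rw [hABS, det_mul, det_mul]
    rw [h1, hdet1M, ← hdetS]; ring
  have hdetmid : ((2⁻¹ : ℝ) • (A + B)).det = A.det * ∏ i, ((1 + μ i) / 2) := by
    rw [det_smul, hdetAB, Finset.prod_div_distrib, Finset.prod_const, Finset.card_univ,
      Fintype.card_fin]
    field_simp
    rw [mul_comm, ← mul_assoc, ← mul_pow]; norm_num
  have hppos : ∀ i, (0:ℝ) < (1 + μ i) / 2 := fun i => by have := hμpos i; linarith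
  have hlogmid : Real.log ((2⁻¹ : ℝ) • (A + B)).det
      = Real.log A.det + ∑ i, Real.log ((1 + μ i) / 2) := by
    rw [hdetmid, Real.log_mul hdetA.ne' (Finset.prod_pos fun i _ => hppos i).ne',
      Real.log_prod fun i _ => (hppos i).ne']
  rw [hlogmid]
  have hfin : ∑ i, Real.log (μ i) / 2 = (Real.log B.det - Real.log A.det) / 2 := by
    rw [← Finset.sum_div, ← hlogM, hlogMB]
  linarith [hsum_lt]

end Helpers

/-- `maxProp n Z V Θ` says that `Θ` is a positive definite matrix in the constraint set
`C = {Θ symmetric : Θ_ij = 0 for (i,j) ∈ Z}` maximizing `f(·; V) = log det · − tr (V ·)`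
over positive definite matrices in `C`. -/
def maxProp (n : ℕ) (Z : Set (Fin n × Fin n)) (V Θ : Matrix (Fin n) (Fin n) ℝ) : Prop :=
  Θ.PosDef ∧ (∀ p ∈ Z, Θ p.1 p.2 = 0) ∧
    ∀ Θ' : Matrix (Fin n) (Fin n) ℝ, Θ'.PosDef → (∀ p ∈ Z, Θ' p.1 p.2 = 0) →
      Real.log Θ'.det - (V * Θ').trace ≤ Real.log Θ.det - (V * Θ).trace

/-- For every positive definite real symmetric `n × n` matrix `V`, there exists a unique
positive definite matrix `Θ* ∈ C` maximizing `f(Θ; V) = log det Θ − tr (V Θ)` over all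
positive definite matrices `Θ ∈ C`, where `C` is the set of symmetric matrices vanishing
on a symmetric set `Z` of off-diagonal index pairs. -/
theorem existsUnique_constrained_maximizer (n : ℕ) (hn : 0 < n)
    (Z : Set (Fin n × Fin n)) (hZoffdiag : ∀ p ∈ Z, p.1 ≠ p.2)
    (hZsymm : ∀ i j : Fin n, (i, j) ∈ Z → (j, i) ∈ Z)
    (V : Matrix (Fin n) (Fin n) ℝ) (hV : V.PosDef) :
    ∃! Θs : Matrix (Fin n) (Fin n) ℝ, maxProp n Z V Θs := by
  classical
  have hne : Nonempty (Fin n) := ⟨⟨0, hn⟩⟩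
  set f : Matrix (Fin n) (Fin n) ℝ → ℝ :=
    fun Θ => Real.log Θ.det - (V * Θ).trace with hf
  -- minimum eigenvalue of V
  obtain ⟨i₀, _, hi₀⟩ := Finset.exists_mem_eq_inf' (Finset.univ_nonempty) hV.1.eigenvalues
  set ε : ℝ := Finset.univ.inf' Finset.univ_nonempty hV.1.eigenvalues with hεdef
  have hε : 0 < ε := by rw [hi₀]; exact hV.eigenvalues_pos i₀
  have hVshift : (V - ε • 1).PosSemidef :=
    shift_lower_psd hV.1 fun i => Finset.inf'_le _ (Finset.mem_univ i)
  set c : ℝ := f 1 with hc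
  set K : ℝ := -Real.log ε - 1 with hK
  set c' : ℝ := c - ((n - 1 : ℕ) : ℝ) * K with hc'
  set δ : ℝ := Real.exp c' with hδdef
  have hδ : 0 < δ := Real.exp_pos c'
  set Mb : ℝ := (max (4 / ε) (|c'| / 2)) ^ 2 with hMb
  -- eigenvalue bounds for near-maximizers
  have hbound : ∀ Θ : Matrix (Fin n) (Fin n) ℝ, Θ.PosDef → c ≤ f Θ →
      (Θ - δ • 1).PosSemidef ∧ (Mb • 1 - Θ).PosSemidef := by
    intro Θ hΘ hcf
    set lam := hΘ.1.eigenvalues with hlamdef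
    have hlam : ∀ i, 0 < lam i := fun i => hΘ.eigenvalues_pos i
    have hlogdet : Real.log Θ.det = ∑ i, Real.log (lam i) := by
      have hd : Θ.det = ∏ i, lam i := by simpa using hΘ.1.det_eq_prod_eigenvalues
      rw [hd, Real.log_prod fun i _ => (hlam i).ne']
    have htrace : Θ.trace = ∑ i, lam i := my_trace_eq_sum hΘ.1
    have htr1 : ε * Θ.trace ≤ (V * Θ).trace := by
      have h0 : 0 ≤ ((V - ε • 1) * Θ).trace := trace_mul_psd_nonneg hVshift hΘ.posSemidef
      have h1 : (V * Θ).trace = ((V - ε • 1) * Θ).trace + ε * Θ.trace := by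
        rw [Matrix.sub_mul, Matrix.trace_sub, smul_mul_assoc, Matrix.one_mul,
          Matrix.trace_smul, smul_eq_mul]
        ring
      linarith
    have hsum : c ≤ ∑ i, (Real.log (lam i) - ε * lam i) := by
      have h2 : f Θ ≤ ∑ i, (Real.log (lam i) - ε * lam i) := by
        rw [hf]
        simp only
        rw [hlogdet, Finset.sum_sub_distrib, ← Finset.mul_sum, ← htrace]
        linarith
      linarith
    have hbd : ∀ j, c' ≤ Real.log (lam j) - ε * lam j := by
      intro j
      have herase : ∑ i ∈ Finset.univ.erase j, (Real.log (lam i) - ε * lam i)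
          ≤ ((n - 1 : ℕ) : ℝ) * K := by
        have hcard : (Finset.univ.erase j).card = n - 1 := by
          rw [Finset.card_erase_of_mem (Finset.mem_univ j), Finset.card_univ, Fintype.card_fin]
        calc ∑ i ∈ Finset.univ.erase j, (Real.log (lam i) - ε * lam i)
            ≤ (Finset.univ.erase j).card • K :=
              Finset.sum_le_card_nsmul _ _ _ fun i _ => term_ub hε (hlam i)
          _ = ((n - 1 : ℕ) : ℝ) * K := by rw [hcard, nsmul_eq_mul]
      have hsplit : Real.log (lam j) - ε * lam j
          = (∑ i, (Real.log (lam i) - ε * lam i))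
            - ∑ i ∈ Finset.univ.erase j, (Real.log (lam i) - ε * lam i) := by
        rw [← Finset.add_sum_erase _ _ (Finset.mem_univ j)]
        ring
      rw [hsplit, hc']
      linarith
    constructor
    · refine shift_lower_psd hΘ.1 fun j => ?_
      have := (scalar_bound hε (hlam j) (hbd j)).1
      rw [hδdef]
      exact this
    · refine shift_upper_psd hΘ.1 fun j => ?_
      have := (scalar_bound hε (hlam j) (hbd j)).2
      rw [hMb]
      exact this
  -- the compact search region
  set S : Set (Matrix (Fin n) (Fin n) ℝ) :=
    {Θ | (∀ p ∈ Z, Θ p.1 p.2 = 0) ∧ (Θ - δ • 1).PosSemidef ∧ (Mb • 1 - Θ).PosSemidef}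
    with hSdef
  have hSposdef : ∀ Θ ∈ S, Θ.PosDef := by
    intro Θ hΘ
    have h1 : ((δ : ℝ) • (1 : Matrix (Fin n) (Fin n) ℝ)).PosDef :=
      myPosDef.smul Matrix.PosDef.one hδ
    have h2 : Θ = (Θ - δ • 1) + δ • 1 := by abel
    rw [h2]
    exact Matrix.PosDef.posSemidef_add hΘ.2.1 h1
  have hSclosed : IsClosed S := by
    have h1 : IsClosed {Θ : Matrix (Fin n) (Fin n) ℝ | ∀ p ∈ Z, Θ p.1 p.2 = 0} := by
      have he : {Θ : Matrix (Fin n) (Fin n) ℝ | ∀ p ∈ Z, Θ p.1 p.2 = 0}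
          = ⋂ p ∈ Z, {Θ : Matrix (Fin n) (Fin n) ℝ | Θ p.1 p.2 = 0} := by
        ext Θ; simp
      rw [he]
      exact isClosed_biInter fun p _ => isClosed_eq
        ((continuous_apply p.2).comp (continuous_apply p.1)) continuous_const
    have h2 : IsClosed {Θ : Matrix (Fin n) (Fin n) ℝ | (Θ - δ • 1).PosSemidef} :=
      IsClosed.preimage (continuous_id.sub continuous_const) isClosed_posSemidef
    have h3 : IsClosed {Θ : Matrix (Fin n) (Fin n) ℝ | (Mb • 1 - Θ).PosSemidef} :=
      IsClosed.preimage (continuous_const.sub continuous_id) isClosed_posSemidef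
    have he : S = {Θ : Matrix (Fin n) (Fin n) ℝ | ∀ p ∈ Z, Θ p.1 p.2 = 0}
        ∩ ({Θ : Matrix (Fin n) (Fin n) ℝ | (Θ - δ • 1).PosSemidef}
          ∩ {Θ : Matrix (Fin n) (Fin n) ℝ | (Mb • 1 - Θ).PosSemidef}) := by
      ext Θ
      simp only [hSdef, Set.mem_setOf_eq, Set.mem_inter_iff]
    rw [he]
    exact h1.inter (h2.inter h3)
  have hScompact : IsCompact S := by
    refine (box_compact Mb).of_isClosed_subset hSclosed fun Θ hΘ => ?_
    intro i j
    exact psd_entry_bound (hSposdef Θ hΘ).posSemidef hΘ.2.2 i j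
  have hScont : ContinuousOn f S := by
    intro Θ hΘ
    exact ((continuousAt_logdet (hSposdef Θ hΘ).det_pos.ne').sub
      (continuous_obj V).continuousAt).continuousWithinAt
  have h1S : (1 : Matrix (Fin n) (Fin n) ℝ) ∈ S := by
    have h1 : ∀ p ∈ Z, (1 : Matrix (Fin n) (Fin n) ℝ) p.1 p.2 = 0 := fun p hp =>
      Matrix.one_apply_ne (hZoffdiag p hp)
    have h2 := hbound 1 Matrix.PosDef.one (le_refl c)
    exact ⟨h1, h2.1, h2.2⟩
  obtain ⟨Θs, hΘsS, hΘsmax⟩ := hScompact.exists_isMaxOn ⟨1, h1S⟩ hScont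
  have hΘspd : Θs.PosDef := hSposdef Θs hΘsS
  have hmaximal : ∀ Θ' : Matrix (Fin n) (Fin n) ℝ, Θ'.PosDef →
      (∀ p ∈ Z, Θ' p.1 p.2 = 0) → f Θ' ≤ f Θs := by
    intro Θ' hΘ' hZ'
    rcases le_total (f Θ') c with h | h
    · exact le_trans h (hΘsmax h1S)
    · have hmem : Θ' ∈ S := ⟨hZ', (hbound Θ' hΘ' h).1, (hbound Θ' hΘ' h).2⟩
      exact hΘsmax hmem
  refine ⟨Θs, ⟨hΘspd, hΘsS.1, hmaximal⟩, ?_⟩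
  -- uniqueness
  intro Θ' h'
  by_contra hneq
  obtain ⟨hΘ'pd, hΘ'Z, hΘ'max⟩ := h'
  have heq : f Θ' = f Θs :=
    le_antisymm (hmaximal Θ' hΘ'pd hΘ'Z) (hΘ'max Θs hΘspd hΘsS.1)
  set mid : Matrix (Fin n) (Fin n) ℝ := (2⁻¹ : ℝ) • (Θ' + Θs) with hmid
  have hmidpd : mid.PosDef := myPosDef.smul (hΘ'pd.add hΘspd) (by norm_num)
  have hmidZ : ∀ p ∈ Z, mid p.1 p.2 = 0 := by
    intro p hp
    simp [hmid, Matrix.add_apply, hΘ'Z p hp, hΘsS.1 p hp]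
  have htracemid : (V * mid).trace = 2⁻¹ * ((V * Θ').trace + (V * Θs).trace) := by
    rw [hmid, Matrix.mul_smul, Matrix.trace_smul, Matrix.mul_add, Matrix.trace_add,
      smul_eq_mul]
  have hlogmid : (Real.log Θ'.det + Real.log Θs.det) / 2 < Real.log mid.det :=
    logdet_mid hΘ'pd hΘspd hneq
  have hmidle : f mid ≤ f Θs := hmaximal mid hmidpd hmidZ
  have : f Θs < f mid := by
    rw [hf]
    simp only
    rw [htracemid]
    have h1 : f Θs = (f Θ' + f Θs) / 2 := by rw [heq]; ring
    rw [hf] at h1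
    simp only at h1
    rw [h1]
    have := hlogmid
    ring_nf
    ring_nf at this
    nlinarith [this]
  linarith
end

section
/- Let Σ₀ be a positive definite real symmetric n×n matrix and let x₁, x₂, … be i.i.d. random vectors in ℝⁿ, each distributed as the centered multivariate Gaussian with covariance Σ₀. If k ≥ n, then the sample covariance matrix S_k = (1/k) ∑_{i=1}^k x_i x_iᵀ is positive definite almost surely. -/
open Matrix MeasureTheory ProbabilityTheory Filter

/-- The centered multivariate Gaussian measure on `ℝⁿ` with (positive semidefinite)
covariance matrix `S₀`: the law of `S₀^{1/2} z` where `z` has i.i.d. standard normal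
entries. -/
noncomputable def gaussianCov (n : ℕ) (S₀ : Matrix (Fin n) (Fin n) ℝ)
    (hS₀ : S₀.PosSemidef) : Measure (Fin n → ℝ) :=
  Measure.map (fun z => ((hS₀.1.eigenvectorUnitary : Matrix (Fin n) (Fin n) ℝ) *
      diagonal (fun i => Real.sqrt (hS₀.1.eigenvalues i)) *
      (star hS₀.1.eigenvectorUnitary : Matrix (Fin n) (Fin n) ℝ)).mulVec z)
    (Measure.pi fun _ : Fin n => gaussianReal 0 1)

/-- The sample covariance matrix `S_k = (1/k) ∑_{i<k} x_i x_iᵀ` of vectors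
`x_0, x_1, …` in `ℝⁿ`. -/
noncomputable def sampleCov (n : ℕ) (x : ℕ → Fin n → ℝ) (k : ℕ) :
    Matrix (Fin n) (Fin n) ℝ :=
  (k : ℝ)⁻¹ • ∑ i ∈ Finset.range k, vecMulVec (x i) (x i)

/- ### Auxiliary lemmas -/

lemma quadForm_sampleCov (n : ℕ) (x : ℕ → Fin n → ℝ) (k : ℕ) (v : Fin n → ℝ) :
    v ⬝ᵥ ((sampleCov n x k) *ᵥ v) = (k:ℝ)⁻¹ * ∑ t ∈ Finset.range k, (x t ⬝ᵥ v)^2 := by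
  have hsum : (∑ t ∈ Finset.range k, vecMulVec (x t) (x t)) *ᵥ v
      = ∑ t ∈ Finset.range k, (x t ⬝ᵥ v) • x t := by
    ext i
    simp only [mulVec, dotProduct, Matrix.sum_apply, Finset.sum_apply, vecMulVec_apply,
      Pi.smul_apply, smul_eq_mul, Finset.sum_mul]
    rw [Finset.sum_comm]
    exact Finset.sum_congr rfl fun t _ =>
      Finset.sum_congr rfl fun j _ => by ring
  simp only [sampleCov, smul_mulVec, dotProduct_smul, smul_eq_mul, hsum]
  congr 1
  simp only [dotProduct, Finset.sum_apply, Pi.smul_apply, smul_eq_mul, Finset.mul_sum, sq]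
  rw [Finset.sum_comm]
  exact Finset.sum_congr rfl fun t _ =>
    Finset.sum_congr rfl fun i _ => by ring

lemma sampleCov_posDef_of_linearIndependent (n k : ℕ) (hn : 0 < n) (hk : n ≤ k)
    (x : ℕ → Fin n → ℝ)
    (hx : LinearIndependent ℝ (fun i : Fin n => x i)) : (sampleCov n x k).PosDef := by
  haveI : Nonempty (Fin n) := ⟨⟨0, hn⟩⟩
  have hkpos : (0:ℝ) < (k:ℝ)⁻¹ := by
    have : 0 < k := lt_of_lt_of_le hn hk
    positivity
  refine PosDef.of_dotProduct_mulVec_pos ?_ ?_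
  · ext i j
    simp only [sampleCov, conjTranspose_apply, Matrix.smul_apply, Matrix.sum_apply,
      vecMulVec_apply, star_trivial, smul_eq_mul]
    rw [Finset.sum_congr rfl fun t _ => mul_comm (x t j) (x t i)]
  · intro v hv
    have hspan : Submodule.span ℝ (Set.range fun i : Fin n => x i) = ⊤ :=
      hx.span_eq_top_of_card_eq_finrank (by simp)
    have hex : ∃ t ∈ Finset.range k, x t ⬝ᵥ v ≠ 0 := by
      by_contra h
      push_neg at h
      apply hv
      have key : ∀ w ∈ Submodule.span ℝ (Set.range fun i : Fin n => x i), w ⬝ᵥ v = 0 := by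
        intro w hw
        refine Submodule.span_induction ?_ ?_ ?_ ?_ hw
        · rintro w ⟨i, rfl⟩
          exact h i (Finset.mem_range.mpr (lt_of_lt_of_le i.2 hk))
        · simp
        · intro a b _ _ ha hb
          rw [add_dotProduct, ha, hb, add_zero]
        · intro c a _ ha
          rw [smul_dotProduct, ha, smul_zero]
      have hvv : v ⬝ᵥ v = 0 := key v (by rw [hspan]; trivial)
      exact dotProduct_self_eq_zero.mp hvv
    simp only [star_trivial]
    rw [quadForm_sampleCov]
    apply mul_pos hkpos
    obtain ⟨t, ht, htne⟩ := hex
    refine Finset.sum_pos' (fun s _ => sq_nonneg _) ⟨t, ht, ?_⟩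
    positivity

lemma absolutelyContinuous_of_map_ac {α β : Type*} [MeasurableSpace α] [MeasurableSpace β]
    (e : α ≃ᵐ β) {μ ν : Measure α}
    (h : Measure.map e μ ≪ Measure.map e ν) : μ ≪ ν := by
  intro s hs
  have h1 : ∀ (m : Measure α), Measure.map e m (e.symm ⁻¹' s) = m s := by
    intro m
    rw [e.map_apply]
    congr 1
    ext a
    simp
  rw [← h1]
  exact h (by rw [h1]; exact hs)

lemma pi_absolutelyContinuous : ∀ (n : ℕ) (μ ν : Fin n → Measure ℝ),
    (∀ i, SigmaFinite (μ i)) → (∀ i, SigmaFinite (ν i)) → (∀ i, μ i ≪ ν i) →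
    Measure.pi μ ≪ Measure.pi ν := by
  intro n
  induction n with
  | zero =>
      intro μ ν _ _ _
      rw [Measure.pi_of_empty μ, Measure.pi_of_empty ν]
  | succ m ih =>
      intro μ ν hμ hν h
      haveI := hμ; haveI := hν
      apply absolutelyContinuous_of_map_ac (MeasurableEquiv.piFinSuccAbove (fun _ => ℝ) 0)
      rw [(measurePreserving_piFinSuccAbove μ 0).map_eq,
        (measurePreserving_piFinSuccAbove ν 0).map_eq]
      exact Measure.AbsolutelyContinuous.prod (h 0)
        (ih _ _ (fun i => hμ _) (fun i => hν _) (fun i => h _))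

lemma gaussianCov_null_submodule (n : ℕ) (S₀ : Matrix (Fin n) (Fin n) ℝ)
    (hS₀ : S₀.PosDef) (p : Submodule ℝ (Fin n → ℝ)) (hp : p ≠ ⊤) :
    gaussianCov n S₀ hS₀.posSemidef (p : Set (Fin n → ℝ)) = 0 := by
  set Q := ((hS₀.posSemidef.1.eigenvectorUnitary : Matrix (Fin n) (Fin n) ℝ) * diagonal (fun i => Real.sqrt (hS₀.posSemidef.1.eigenvalues i)) * (star hS₀.posSemidef.1.eigenvectorUnitary : Matrix (Fin n) (Fin n) ℝ)) with hQ
  have hdet : IsUnit Q.det := by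
    have hU : (hS₀.posSemidef.1.eigenvectorUnitary : Matrix (Fin n) (Fin n) ℝ).det *
        (star hS₀.posSemidef.1.eigenvectorUnitary : Matrix (Fin n) (Fin n) ℝ).det = 1 := by
      rw [← Matrix.det_mul,
        Unitary.mul_star_self_of_mem hS₀.posSemidef.1.eigenvectorUnitary.2, det_one]
    have hp : ∏ i, Real.sqrt (hS₀.posSemidef.1.eigenvalues i) ≠ 0 :=
      Finset.prod_ne_zero_iff.mpr fun i _ => (Real.sqrt_pos.mpr (hS₀.eigenvalues_pos i)).ne'
    rw [hQ, det_mul, det_mul, det_diagonal]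
    refine isUnit_iff_ne_zero.mpr fun h0 => hp ?_
    have h3 := congrArg (fun t => t) h0
    rw [show ∀ a b c : ℝ, a * b * c = (a * c) * b from fun a b c => by ring, hU, one_mul] at h3
    exact h3
  have hsurj : Function.Surjective Q.mulVec :=
    Matrix.mulVec_surjective_iff_isUnit.mpr (Matrix.isUnit_iff_isUnit_det Q |>.mpr hdet)
  have hmeas : Measurable (fun z : Fin n → ℝ => Q.mulVec z) :=
    (Matrix.mulVecLin Q).continuous_of_finiteDimensional.measurable
  have hpm : MeasurableSet (p : Set (Fin n → ℝ)) :=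
    (Submodule.closed_of_finiteDimensional p).measurableSet
  rw [gaussianCov, Measure.map_apply hmeas hpm]
  have hpre : (fun z : Fin n → ℝ => Q.mulVec z) ⁻¹' p
      = (p.comap (Matrix.mulVecLin Q) : Set (Fin n → ℝ)) := rfl
  rw [hpre]
  have hne : p.comap (Matrix.mulVecLin Q) ≠ ⊤ := by
    intro htop
    apply hp
    rw [Submodule.eq_top_iff']
    intro v
    obtain ⟨z, rfl⟩ := hsurj v
    have : z ∈ p.comap (Matrix.mulVecLin Q) := by rw [htop]; trivial
    exact this
  refine pi_absolutelyContinuous n _ (fun _ => volume) (fun _ => inferInstance)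
    (fun _ => inferInstance)
    (fun _ => gaussianReal_absolutelyContinuous 0 one_ne_zero) ?_
  rw [← volume_pi]
  exact Measure.addHaar_submodule volume _ hne

lemma snoc_continuous (j n : ℕ) :
    Continuous (fun p : (Fin j → (Fin n → ℝ)) × (Fin n → ℝ) =>
      (Fin.snoc p.1 p.2 : Fin (j+1) → (Fin n → ℝ))) := by
  refine continuous_pi fun i => ?_
  refine Fin.lastCases ?_ ?_ i
  · simp only [Fin.snoc_last]
    exact continuous_snd
  · intro i
    simp only [Fin.snoc_castSucc]
    exact (continuous_apply i).comp continuous_fst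

lemma snoc_X {n : ℕ} (j : ℕ) {Ω : Type*} (X : ℕ → Ω → (Fin n → ℝ)) (ω : Ω) :
    (fun i : Fin (j+1) => X i ω) = Fin.snoc (fun i : Fin j => X i ω) (X j ω) := by
  funext i
  refine Fin.lastCases ?_ ?_ i
  · simp
  · intro i
    simp

/-- Let `S₀ = Σ₀` be a positive definite real symmetric `n × n` matrix and let
`X 0, X 1, …` be i.i.d. random vectors in `ℝⁿ`, each a centered multivariate Gaussian
with covariance `Σ₀`.  If `k ≥ n`, the sample covariance `S_k` is positive definite
almost surely. -/
theorem sampleCov_posDef_ae (n : ℕ) (hn : 0 < n)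
    (S₀ : Matrix (Fin n) (Fin n) ℝ) (hS₀ : S₀.PosDef)
    {Ω : Type*} [MeasurableSpace Ω] (μ : Measure Ω) [IsProbabilityMeasure μ]
    (X : ℕ → Ω → (Fin n → ℝ)) (hmeas : ∀ i, Measurable (X i))
    (hindep : iIndepFun X μ)
    (hdist : ∀ i, Measure.map (X i) μ = gaussianCov n S₀ hS₀.posSemidef)
    (k : ℕ) (hk : n ≤ k) :
    ∀ᵐ ω ∂μ, (sampleCov n (fun i => X i ω) k).PosDef := by
  haveI hνP : IsProbabilityMeasure (gaussianCov n S₀ hS₀.posSemidef) := by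
    rw [gaussianCov]
    exact Measure.isProbabilityMeasure_map
      ((Matrix.mulVecLin ((hS₀.posSemidef.1.eigenvectorUnitary : Matrix (Fin n) (Fin n) ℝ) * diagonal (fun i => Real.sqrt (hS₀.posSemidef.1.eigenvalues i)) * (star hS₀.posSemidef.1.eigenvectorUnitary : Matrix (Fin n) (Fin n) ℝ))).continuous_of_finiteDimensional.measurable).aemeasurable
  have key : ∀ j : ℕ, j ≤ n →
      μ {ω | ¬ LinearIndependent ℝ (fun i : Fin j => X i ω)} = 0 := by
    intro j
    induction j with
    | zero =>
        intro _
        have h0 : {ω : Ω | ¬ LinearIndependent ℝ (fun i : Fin 0 => X i ω)} = ∅ := by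
          ext ω
          simp [linearIndependent_empty_type]
        rw [h0]
        exact measure_empty
    | succ j ih =>
        intro hj1
        have hj : j < n := hj1
        set Y : Ω → (Fin j → (Fin n → ℝ)) := fun ω i => X i ω with hYdef
        have hYm : Measurable Y := measurable_pi_lambda _ fun i => hmeas i
        set S : Set ((Fin j → (Fin n → ℝ)) × (Fin n → ℝ)) :=
          {p | LinearIndependent ℝ p.1 ∧
            ¬ LinearIndependent ℝ (Fin.snoc p.1 p.2 : Fin (j+1) → (Fin n → ℝ))} with hSdef
        have hSm : MeasurableSet S := by
          have h1 : IsOpen {p : (Fin j → (Fin n → ℝ)) × (Fin n → ℝ) |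
              LinearIndependent ℝ p.1} :=
            isOpen_setOf_linearIndependent.preimage continuous_fst
          have h2 : IsOpen {p : (Fin j → (Fin n → ℝ)) × (Fin n → ℝ) |
              LinearIndependent ℝ (Fin.snoc p.1 p.2 : Fin (j+1) → (Fin n → ℝ))} :=
            isOpen_setOf_linearIndependent.preimage (snoc_continuous j n)
          exact h1.measurableSet.inter h2.measurableSet.compl
        have hIndep : IndepFun Y (X j) μ := by
          have hIF := hindep.indepFun_finset (Finset.range j) {j}
            (by simp) hmeas
          have hφ : Measurable (fun v : (↥(Finset.range j) → (Fin n → ℝ)) =>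
              (fun i : Fin j => v ⟨(i:ℕ), Finset.mem_range.mpr i.2⟩)) :=
            measurable_pi_lambda _ fun i => measurable_pi_apply _
          have hψ : Measurable (fun w : (↥({j} : Finset ℕ) → (Fin n → ℝ)) =>
              w ⟨j, Finset.mem_singleton_self j⟩) := measurable_pi_apply _
          exact hIF.comp hφ hψ
        have hmap : Measure.map (fun ω => (Y ω, X j ω)) μ
            = (Measure.map Y μ).prod (gaussianCov n S₀ hS₀.posSemidef) := by
          rw [← hdist j]
          exact (indepFun_iff_map_prod_eq_prod_map_map hYm.aemeasurable
            (hmeas j).aemeasurable).mp hIndep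
        have hslice : ∀ y : Fin j → (Fin n → ℝ),
            gaussianCov n S₀ hS₀.posSemidef (Prod.mk y ⁻¹' S) = 0 := by
          intro y
          by_cases hLI : LinearIndependent ℝ y
          · have hspan : Submodule.span ℝ (Set.range y) ≠ ⊤ := by
              intro htop
              have hle := finrank_le_of_span_eq_top htop
              rw [Module.finrank_fin_fun] at hle
              simp only [Fintype.card_fin] at hle
              omega
            have hset : Prod.mk y ⁻¹' S
                = (Submodule.span ℝ (Set.range y) : Set (Fin n → ℝ)) := by
              ext z
              simp only [hSdef, Set.mem_preimage, Set.mem_setOf_eq, SetLike.mem_coe]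
              constructor
              · rintro ⟨-, hns⟩
                by_contra hz
                exact hns (linearIndependent_fin_snoc.mpr ⟨hLI, hz⟩)
              · intro hz
                exact ⟨hLI, fun hsn => (linearIndependent_fin_snoc.mp hsn).2 hz⟩
            rw [hset]
            exact gaussianCov_null_submodule n S₀ hS₀ _ hspan
          · have hset : Prod.mk y ⁻¹' S = ∅ := by
              ext z
              simp [hSdef, hLI]
            rw [hset]
            exact measure_empty
        have hC : μ {ω | LinearIndependent ℝ (Y ω) ∧
            ¬ LinearIndependent ℝ (Fin.snoc (Y ω) (X j ω) : Fin (j+1) → (Fin n → ℝ))} = 0 := by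
          have hZm : Measurable (fun ω => (Y ω, X j ω)) := hYm.prodMk (hmeas j)
          haveI : IsProbabilityMeasure (Measure.map Y μ) :=
            Measure.isProbabilityMeasure_map hYm.aemeasurable
          have heq : {ω | LinearIndependent ℝ (Y ω) ∧
              ¬ LinearIndependent ℝ (Fin.snoc (Y ω) (X j ω) : Fin (j+1) → (Fin n → ℝ))}
              = (fun ω => (Y ω, X j ω)) ⁻¹' S := rfl
          rw [heq, ← Measure.map_apply hZm hSm, hmap, Measure.prod_apply hSm]
          simp [hslice]
        refine le_antisymm ?_ zero_le
        have hsub : {ω | ¬ LinearIndependent ℝ (fun i : Fin (j+1) => X i ω)}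
            ⊆ {ω | ¬ LinearIndependent ℝ (fun i : Fin j => X i ω)}
              ∪ {ω | LinearIndependent ℝ (Y ω) ∧
                ¬ LinearIndependent ℝ (Fin.snoc (Y ω) (X j ω) : Fin (j+1) → (Fin n → ℝ))} := by
          intro ω hω
          simp only [Set.mem_setOf_eq] at hω
          rw [snoc_X j X ω] at hω
          by_cases hLI : LinearIndependent ℝ (fun i : Fin j => X i ω)
          · right
            exact ⟨hLI, hω⟩
          · left
            exact hLI
        calc μ {ω | ¬ LinearIndependent ℝ (fun i : Fin (j+1) => X i ω)}
            ≤ μ ({ω | ¬ LinearIndependent ℝ (fun i : Fin j => X i ω)}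
              ∪ {ω | LinearIndependent ℝ (Y ω) ∧
                ¬ LinearIndependent ℝ (Fin.snoc (Y ω) (X j ω) : Fin (j+1) → (Fin n → ℝ))}) :=
              measure_mono hsub
          _ ≤ μ {ω | ¬ LinearIndependent ℝ (fun i : Fin j => X i ω)}
              + μ {ω | LinearIndependent ℝ (Y ω) ∧
                ¬ LinearIndependent ℝ (Fin.snoc (Y ω) (X j ω) : Fin (j+1) → (Fin n → ℝ))} :=
              measure_union_le _ _
          _ = 0 := by rw [ih (le_of_lt hj), hC, add_zero]
  have hae : ∀ᵐ ω ∂μ, LinearIndependent ℝ (fun i : Fin n => X i ω) := by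
    rw [ae_iff]
    exact key n le_rfl
  filter_upwards [hae] with ω hω
  exact sampleCov_posDef_of_linearIndependent n k hn hk (fun i => X i ω) hω
end
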